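/- arXiv:0910.1534 — 2 statements merged into one kernel-verified Lean document; each statement's English description precedes it below -/
import Mathlib

section
/- Unconditionally (without assuming the Riemann Hypothesis), there exists a constant C > 0 such that |c_k| ≤ C · k^(-1/2) for all integers k ≥ 1. -/
open Finset

/-- The Báez-Duarte sequence `c_k = ∑_{j=0}^{k} (-1)^j C(k,j) / ζ(2j+2)`. -/
noncomputable def baezDuarteC (k : ℕ) : ℂ :=
  ∑ j ∈ Finset.range (k + 1), (-1) ^ j * (k.choose j : ℂ) / riemannZeta (2 * j + 2)

namespace BaezDuarteAux

open ArithmeticFunction Filter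
open scoped LSeries.notation
open scoped ArithmeticFunction.Moebius

/-- The real term `μ(n)/n² · (1 - 1/n²)^k`. -/
noncomputable def gr (k n : ℕ) : ℝ :=
  if n = 0 then 0 else (μ n : ℝ) * (1 - ((n : ℝ) ^ 2)⁻¹) ^ k / (n : ℝ) ^ 2

lemma arg_eq (j : ℕ) : (2 * (j : ℂ) + 2) = ((2 * j + 2 : ℕ) : ℂ) := by push_cast; ring

lemma arg_re (j : ℕ) : 1 < (2 * (j : ℂ) + 2).re := by
  rw [arg_eq, Complex.natCast_re]
  exact_mod_cast (by omega : 1 < 2 * j + 2)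

lemma zeta_inv (j : ℕ) :
    (riemannZeta (2 * (j : ℂ) + 2))⁻¹ = ∑' n : ℕ, LSeries.term ↗μ (2 * (j : ℂ) + 2) n := by
  have h := LSeries_one_mul_Lseries_moebius (arg_re j)
  rw [LSeries_one_eq_riemannZeta (arg_re j)] at h
  rw [inv_eq_of_mul_eq_one_right h]
  rfl

lemma key (k : ℕ) : baezDuarteC k = ∑' n : ℕ, ((gr k n : ℝ) : ℂ) := by
  have hsummable : ∀ j : ℕ, Summable (fun n : ℕ =>
        (-1 : ℂ) ^ j * (k.choose j : ℂ) * LSeries.term ↗μ (2 * (j : ℂ) + 2) n) :=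
    fun j => ((LSeriesSummable_moebius_iff.mpr (arg_re j))).mul_left _
  have step : baezDuarteC k = ∑ j ∈ Finset.range (k + 1), ∑' n : ℕ,
      (-1 : ℂ) ^ j * (k.choose j : ℂ) * LSeries.term ↗μ (2 * (j : ℂ) + 2) n := by
    unfold baezDuarteC
    refine Finset.sum_congr rfl fun j _ => ?_
    rw [div_eq_mul_inv, zeta_inv j, ← tsum_mul_left]
  rw [step, ← Summable.tsum_finsetSum (fun j _ => hsummable j)]
  refine tsum_congr fun n => ?_
  rcases eq_or_ne n 0 with rfl | hn
  · simp [gr, LSeries.term]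
  have hnc : (n : ℂ) ≠ 0 := Nat.cast_ne_zero.mpr hn
  have hterm : ∀ j : ℕ, LSeries.term ↗μ (2 * (j : ℂ) + 2) n
      = (μ n : ℂ) / (n : ℂ) ^ (2 * j + 2) := by
    intro j
    rw [LSeries.term_of_ne_zero hn, arg_eq, Complex.cpow_natCast]
  simp only [hterm]
  have hbin : ((1 : ℂ) - ((n : ℂ) ^ 2)⁻¹) ^ k
      = ∑ j ∈ Finset.range (k + 1),
          (-(((n : ℂ) ^ 2)⁻¹)) ^ j * 1 ^ (k - j) * (k.choose j : ℂ) := by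
    rw [← add_pow]
    ring_nf
  have : ((gr k n : ℝ) : ℂ)
      = (μ n : ℂ) * ((1 : ℂ) - ((n : ℂ) ^ 2)⁻¹) ^ k / (n : ℂ) ^ 2 := by
    simp only [gr, hn, if_false]
    push_cast
    ring
  rw [this, hbin, Finset.mul_sum, Finset.sum_div]
  refine Finset.sum_congr rfl fun j _ => ?_
  have hpow : ((n : ℂ)) ^ (2 * j + 2) = (n : ℂ) ^ 2 * ((n : ℂ) ^ 2) ^ j := by
    rw [pow_add, pow_mul]; ring
  rw [hpow]
  field_simp
  have hcd : (n : ℂ) ^ (j * 2) * (n : ℂ)⁻¹ ^ (j * 2) = 1 := by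
    rw [← mul_pow, mul_inv_cancel₀ hnc, one_pow]
  linear_combination (-((k.choose j : ℂ) * (μ n : ℂ) * (-1) ^ j)) * hcd

/-- The comparison term `1/(n²+k)`. -/
noncomputable def b (k n : ℕ) : ℝ := ((n : ℝ) ^ 2 + k)⁻¹

lemma b_nonneg (k n : ℕ) : 0 ≤ b k n := by
  unfold b; positivity

lemma gr_abs_le (k n : ℕ) (hk : 1 ≤ k) : |gr k n| ≤ b k n := by
  have hk' : (0 : ℝ) < k := by exact_mod_cast hk
  rcases eq_or_ne n 0 with rfl | hn
  · simp [gr, b_nonneg]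
  have hn1 : 1 ≤ n := Nat.one_le_iff_ne_zero.mpr hn
  have hn2 : (0 : ℝ) < (n : ℝ) ^ 2 := by positivity
  set x : ℝ := ((n : ℝ) ^ 2)⁻¹ with hxdef
  have hx0 : 0 < x := by positivity
  have hx1 : x ≤ 1 := by
    rw [hxdef]
    rw [inv_le_one_iff₀]
    right
    exact_mod_cast Nat.one_le_pow _ _ hn1
  have h1x : 0 ≤ 1 - x := by linarith
  have hmu : |(μ n : ℝ)| ≤ 1 := by
    have := (abs_moebius_le_one (n := n))
    exact_mod_cast this
  have hkey : (1 - x) ^ k * (1 + k * x) ≤ 1 := by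
    have h1 : 1 + (k : ℝ) * x ≤ (1 + x) ^ k := one_add_mul_le_pow (by linarith) k
    calc (1 - x) ^ k * (1 + k * x) ≤ (1 - x) ^ k * (1 + x) ^ k :=
          mul_le_mul_of_nonneg_left h1 (pow_nonneg h1x k)
      _ = ((1 - x) * (1 + x)) ^ k := (mul_pow _ _ _).symm
      _ = (1 - x ^ 2) ^ k := by ring_nf
      _ ≤ 1 := pow_le_one₀ (by nlinarith) (by nlinarith)
  have hxid : (n : ℝ) ^ 2 * x = 1 := mul_inv_cancel₀ hn2.ne'
  have hsplit : ((n : ℝ) ^ 2 + k) = (n : ℝ) ^ 2 * (1 + k * x) := by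
    have : (n : ℝ) ^ 2 * ((k : ℝ) * x) = k := by
      rw [mul_comm (k : ℝ) x, ← mul_assoc, hxid, one_mul]
    linarith [this]
  have hmain : (1 - x) ^ k * ((n : ℝ) ^ 2 + k) ≤ (n : ℝ) ^ 2 := by
    rw [hsplit]
    calc (1 - x) ^ k * ((n : ℝ) ^ 2 * (1 + k * x))
        = (n : ℝ) ^ 2 * ((1 - x) ^ k * (1 + k * x)) := by ring
      _ ≤ (n : ℝ) ^ 2 * 1 := mul_le_mul_of_nonneg_left hkey hn2.le
      _ = (n : ℝ) ^ 2 := mul_one _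
  have hfr : (1 - x) ^ k / (n : ℝ) ^ 2 ≤ ((n : ℝ) ^ 2 + k)⁻¹ := by
    rw [inv_eq_one_div, div_le_div_iff₀ hn2 (by positivity)]
    linarith [hmain]
  have habs : |gr k n| = |(μ n : ℝ)| * ((1 - x) ^ k / (n : ℝ) ^ 2) := by
    simp only [gr, hn, if_false]
    rw [abs_div, abs_mul, abs_pow, abs_of_nonneg h1x, abs_of_nonneg hn2.le, mul_div_assoc]
  rw [habs]
  unfold b
  calc |(μ n : ℝ)| * ((1 - x) ^ k / (n : ℝ) ^ 2)
      ≤ 1 * ((1 - x) ^ k / (n : ℝ) ^ 2) :=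
        mul_le_mul_of_nonneg_right hmu (by positivity)
    _ = (1 - x) ^ k / (n : ℝ) ^ 2 := one_mul _
    _ ≤ ((n : ℝ) ^ 2 + k)⁻¹ := hfr

lemma b_summable (k : ℕ) (hk : 1 ≤ k) : Summable (b k) := by
  have hs : Summable (fun n : ℕ => 2 * (((n : ℝ) + 1) ^ 2)⁻¹) := by
    have h0 : Summable (fun n : ℕ => ((n : ℝ) ^ 2)⁻¹) := by
      simpa [one_div] using (Real.summable_one_div_nat_pow (p := 2)).mpr le_rfl
    have h1 : Summable (fun n : ℕ => (((n + 1 : ℕ) : ℝ) ^ 2)⁻¹) :=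
      (summable_nat_add_iff 1).mpr h0
    refine ((h1.congr ?_).mul_left 2)
    intro n; push_cast; ring
  refine Summable.of_nonneg_of_le (b_nonneg k) (fun n => ?_) hs
  unfold b
  have hk' : (1 : ℝ) ≤ k := by exact_mod_cast hk
  calc ((n : ℝ) ^ 2 + k)⁻¹ ≤ (((n : ℝ) + 1) ^ 2 / 2)⁻¹ := by
        apply inv_anti₀ (by positivity)
        nlinarith [sq_nonneg ((n : ℝ) - 1)]
    _ = 2 * (((n : ℝ) + 1) ^ 2)⁻¹ := by rw [inv_div, div_eq_mul_inv]

lemma telescope (M : ℕ) (hM : 1 ≤ M) :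
    HasSum (fun i : ℕ => (((M : ℝ) + i) * ((M : ℝ) + i + 1))⁻¹) ((M : ℝ))⁻¹ := by
  have hM' : (1 : ℝ) ≤ M := by exact_mod_cast hM
  have hpos : ∀ i : ℕ, 0 < (M : ℝ) + i := fun i => by
    have : (0 : ℝ) ≤ i := Nat.cast_nonneg i
    linarith
  set f : ℕ → ℝ := fun i => ((M : ℝ) + i)⁻¹ with hf
  have heq : ∀ i : ℕ, (((M : ℝ) + i) * ((M : ℝ) + i + 1))⁻¹ = f i - f (i + 1) := by
    intro i
    have h1 : (0 : ℝ) < (M : ℝ) + i := hpos i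
    have h2 : (0 : ℝ) < (M : ℝ) + i + 1 := by linarith
    have h3 : ((M : ℝ) + (i + 1 : ℕ)) = (M : ℝ) + i + 1 := by push_cast; ring
    rw [hf]
    simp only [h3]
    field_simp
    ring
  have hnonneg : ∀ i : ℕ, 0 ≤ (((M : ℝ) + i) * ((M : ℝ) + i + 1))⁻¹ := by
    intro i
    have h1 := hpos i
    positivity
  simp only [heq] at hnonneg ⊢
  rw [hasSum_iff_tendsto_nat_of_nonneg hnonneg]
  have hps : ∀ n : ℕ, ∑ i ∈ Finset.range n, (f i - f (i + 1)) = f 0 - f n :=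
    fun n => Finset.sum_range_sub' f n
  simp only [hps]
  have hf0 : f 0 = (M : ℝ)⁻¹ := by simp [hf]
  rw [hf0]
  have htend : Tendsto f atTop (nhds 0) := by
    apply Filter.Tendsto.inv_tendsto_atTop
    exact tendsto_atTop_add_const_left _ _ tendsto_natCast_atTop_atTop
  simpa using tendsto_const_nhds.sub htend

lemma tsum_b_le (k : ℕ) (hk : 1 ≤ k) : ∑' n, b k n ≤ 4 / Real.sqrt k := by
  have hk' : (0 : ℝ) < k := by exact_mod_cast hk
  set M : ℕ := Nat.sqrt k + 1 with hMdef
  have hM1 : 1 ≤ M := Nat.le_add_left 1 _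
  have hMpos : (0 : ℝ) < M := by exact_mod_cast hM1
  set s : ℝ := Real.sqrt k with hsdef
  have hs1 : 1 ≤ s := by
    rw [hsdef]
    rw [show (1 : ℝ) = Real.sqrt 1 from (Real.sqrt_one).symm]
    exact Real.sqrt_le_sqrt (by exact_mod_cast hk)
  have hs0 : 0 < s := lt_of_lt_of_le one_pos hs1
  have hssq : s * s = k := Real.mul_self_sqrt hk'.le
  have hsM : s ≤ M := by
    have h1 : k < M ^ 2 := by
      rw [hMdef]; exact Nat.lt_succ_sqrt' k
    have h2 : (k : ℝ) ≤ (M : ℝ) ^ 2 := by exact_mod_cast h1.le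
    nlinarith [hssq, hs0, hMpos]
  have hM2s : (M : ℝ) ≤ 2 * s := by
    have h1 : (Nat.sqrt k : ℝ) ≤ s := by
      have h2 : Nat.sqrt k ^ 2 ≤ k := Nat.sqrt_le' k
      have h3 : ((Nat.sqrt k : ℝ)) ^ 2 ≤ k := by exact_mod_cast h2
      nlinarith [hssq, hs0, (Nat.cast_nonneg (Nat.sqrt k) : (0:ℝ) ≤ (Nat.sqrt k : ℝ))]
    have : (M : ℝ) = (Nat.sqrt k : ℝ) + 1 := by rw [hMdef]; push_cast; ring
    linarith
  have hsum := b_summable k hk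
  rw [← Summable.sum_add_tsum_nat_add M hsum]
  -- head estimate
  have hhead : ∑ i ∈ Finset.range M, b k i ≤ (M : ℝ) * (k : ℝ)⁻¹ := by
    have : ∀ i ∈ Finset.range M, b k i ≤ (k : ℝ)⁻¹ := by
      intro i _
      unfold b
      apply inv_anti₀ hk'
      nlinarith [sq_nonneg ((i : ℝ))]
    calc ∑ i ∈ Finset.range M, b k i ≤ ∑ _i ∈ Finset.range M, (k : ℝ)⁻¹ :=
          Finset.sum_le_sum this
      _ = (M : ℝ) * (k : ℝ)⁻¹ := by
          rw [Finset.sum_const, Finset.card_range, nsmul_eq_mul]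
  -- tail estimate
  have htel := telescope M hM1
  have htailsummable : Summable (fun i : ℕ => b k (i + M)) :=
    (summable_nat_add_iff M).mpr hsum
  have htail : ∑' i : ℕ, b k (i + M) ≤ 2 * (M : ℝ)⁻¹ := by
    have hpt : ∀ i : ℕ, b k (i + M) ≤ 2 * (((M : ℝ) + i) * ((M : ℝ) + i + 1))⁻¹ := by
      intro i
      unfold b
      have hc : ((i + M : ℕ) : ℝ) = (M : ℝ) + i := by push_cast; ring
      rw [hc]
      have h1 : (0 : ℝ) < (M : ℝ) + i := by
        have : (0 : ℝ) ≤ i := Nat.cast_nonneg i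
        linarith
      have h2 : (0 : ℝ) < (M : ℝ) + i + 1 := by linarith
      calc (((M : ℝ) + i) ^ 2 + (k : ℝ))⁻¹
          ≤ (((M : ℝ) + i) * (((M : ℝ) + i) + 1) / 2)⁻¹ := by
            apply inv_anti₀ (by positivity)
            nlinarith [sq_nonneg ((M : ℝ) + i - 1), hk']
        _ = 2 * (((M : ℝ) + i) * ((M : ℝ) + i + 1))⁻¹ := by
            rw [inv_div, div_eq_mul_inv]
    calc ∑' i : ℕ, b k (i + M)
        ≤ ∑' i : ℕ, 2 * (((M : ℝ) + i) * ((M : ℝ) + i + 1))⁻¹ :=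
          Summable.tsum_le_tsum hpt htailsummable (htel.summable.mul_left 2)
      _ = 2 * (M : ℝ)⁻¹ := (htel.mul_left 2).tsum_eq
  have hA : (M : ℝ) * (k : ℝ)⁻¹ ≤ 2 / s := by
    rw [← div_eq_mul_inv, div_le_div_iff₀ hk' hs0]
    nlinarith [hM2s, hssq, hs0]
  have hB : 2 * (M : ℝ)⁻¹ ≤ 2 / s := by
    rw [← div_eq_mul_inv]
    apply div_le_div_of_nonneg_left (by norm_num) hs0 hsM
  have : 2 / s + 2 / s = 4 / s := by ring
  linarith [hhead, htail, hA, hB]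

end BaezDuarteAux

/-- Unconditionally, `c_k = O(k^{-1/2})`. -/
theorem baez_duarte_unconditional :
    ∃ C : ℝ, 0 < C ∧ ∀ k : ℕ, 1 ≤ k →
      ‖baezDuarteC k‖ ≤ C * (k : ℝ) ^ (-(1 : ℝ) / 2) := by
  refine ⟨4, by norm_num, fun k hk => ?_⟩
  have hk' : (0 : ℝ) < k := by exact_mod_cast hk
  have habs_sum : Summable (fun n => |BaezDuarteAux.gr k n|) :=
    Summable.of_nonneg_of_le (fun n => abs_nonneg _)
      (fun n => BaezDuarteAux.gr_abs_le k n hk) (BaezDuarteAux.b_summable k hk)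
  have hgr : Summable (BaezDuarteAux.gr k) := habs_sum.of_abs
  rw [BaezDuarteAux.key k, ← Complex.ofReal_tsum, Complex.norm_real, Real.norm_eq_abs]
  have h1 : |∑' n, BaezDuarteAux.gr k n| ≤ ∑' n, |BaezDuarteAux.gr k n| := by
    simpa [Real.norm_eq_abs] using norm_tsum_le_tsum_norm
      (by simpa [Real.norm_eq_abs] using habs_sum : Summable fun n => ‖BaezDuarteAux.gr k n‖)
  have h2 : ∑' n, |BaezDuarteAux.gr k n| ≤ ∑' n, BaezDuarteAux.b k n :=
    Summable.tsum_le_tsum (fun n => BaezDuarteAux.gr_abs_le k n hk) habs_sum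
      (BaezDuarteAux.b_summable k hk)
  have h3 := BaezDuarteAux.tsum_b_le k hk
  have hrw : (k : ℝ) ^ (-(1 : ℝ) / 2) = (Real.sqrt k)⁻¹ := by
    rw [neg_div, Real.rpow_neg hk'.le, ← Real.sqrt_eq_rpow]
  rw [hrw]
  have : 4 * (Real.sqrt k)⁻¹ = 4 / Real.sqrt k := by rw [div_eq_mul_inv]
  linarith [h1, h2, h3]
end

section
/- For every complex number s with Re(s) > 0 and 2^(1-s) ≠ 1, the partial sums Σ_{n=1}^{N} (-1)^n · (log n) / n^s converge as N → ∞ to (1 - 2^(1-s)) · ζ'(s) + (log 2) · 2^(1-s) · ζ(s), where ζ' is the derivative of the Riemann zeta function; equivalently, ζ'(s) = -((log 2) · 2^(1-s) / (1 - 2^(1-s))^2) · Σ_{n=1}^{∞} (-1)^(n-1)/n^s + (1/(1 - 2^(1-s))) · Σ_{n=1}^{∞} (-1)^n (log n)/n^s, with both series understood as limits of partial sums. -/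
open Finset Filter

namespace EtaDeriv

/-- The `n`-th term of the differentiated eta series. -/
noncomputable def etaT (s : ℂ) (n : ℕ) : ℂ :=
  (-1) ^ (n + 1) * Complex.log ((n : ℂ) + 1) / ((n : ℂ) + 1) ^ s

/-- The auxiliary real-variable function `x ↦ log x · x^(-s)`. -/
noncomputable def lf (s : ℂ) (x : ℝ) : ℂ := (Real.log x : ℂ) * (x : ℂ) ^ (-s)

/-- Formal derivative of `lf` in the real variable. -/
noncomputable def lf' (s : ℂ) (x : ℝ) : ℂ :=
  ((x⁻¹ : ℝ) : ℂ) * (x : ℂ) ^ (-s) + (Real.log x : ℂ) * (-s * (x : ℂ) ^ (-s - 1))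

lemma lf_hasDerivAt (s : ℂ) {x : ℝ} (hx : 0 < x) :
    HasDerivAt (lf s) (lf' s x) x := by
  have h1 : HasDerivAt (fun y : ℝ => ((Real.log y : ℝ) : ℂ)) ((x⁻¹ : ℝ) : ℂ) x :=
    (Real.hasDerivAt_log hx.ne').ofReal_comp
  have h2 : HasDerivAt (fun y : ℝ => ((y : ℝ) : ℂ) ^ (-s)) (-s * (x : ℂ) ^ (-s - 1)) x := by
    have h := (hasDerivAt_id ((x : ℝ) : ℂ)).cpow_const (c := -s)
      (Or.inl (by simpa using hx))
    simpa using h.comp_ofReal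
  exact (h1.fun_mul h2).congr_deriv (by simp [lf'])

lemma norm_cpow_real {x : ℝ} (hx : 0 < x) (w : ℂ) : ‖(x : ℂ) ^ w‖ = x ^ w.re := by
  rw [Complex.norm_cpow_eq_rpow_re_of_pos hx]

lemma lf'_norm_le {ε R : ℝ} {s : ℂ} (hsε : ε ≤ s.re) (hsR : ‖s‖ ≤ R)
    {x : ℝ} (hx : 1 ≤ x) :
    ‖lf' s x‖ ≤ (1 + R * Real.log x) * x ^ (-(1 + ε)) := by
  have hx0 : (0 : ℝ) < x := lt_of_lt_of_le one_pos hx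
  have hlog : 0 ≤ Real.log x := Real.log_nonneg hx
  have hR : 0 ≤ R := le_trans (norm_nonneg s) hsR
  have hxp : ∀ a b : ℝ, a ≤ b → x ^ (-b) ≤ x ^ (-a) := fun a b hab =>
    Real.rpow_le_rpow_of_exponent_le hx (neg_le_neg hab)
  have h1 : ‖((x⁻¹ : ℝ) : ℂ) * (x : ℂ) ^ (-s)‖ ≤ x ^ (-(1 + ε)) := by
    rw [norm_mul, norm_cpow_real hx0]
    have : ‖((x⁻¹ : ℝ) : ℂ)‖ = x ^ (-1 : ℝ) := by
      rw [Complex.norm_real, Real.norm_eq_abs, abs_of_pos (inv_pos.mpr hx0),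
        Real.rpow_neg_one]
    rw [this]
    calc x ^ (-1 : ℝ) * x ^ (-s).re ≤ x ^ (-1 : ℝ) * x ^ (-ε) := by
          apply mul_le_mul_of_nonneg_left _ (Real.rpow_nonneg hx0.le _)
          simpa using hxp ε s.re hsε
      _ = x ^ (-(1 + ε)) := by
          rw [← Real.rpow_add hx0]; ring_nf
  have h2 : ‖(Real.log x : ℂ) * (-s * (x : ℂ) ^ (-s - 1))‖ ≤
      R * Real.log x * x ^ (-(1 + ε)) := by
    rw [norm_mul, norm_mul, norm_neg, norm_cpow_real hx0]
    have he : (-s - 1).re = -(s.re + 1) := by simp [Complex.sub_re]; ring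
    rw [Complex.norm_real, Real.norm_eq_abs, abs_of_nonneg hlog, he]
    have hle : x ^ (-(s.re + 1)) ≤ x ^ (-(1 + ε)) := by
      apply hxp; linarith
    calc Real.log x * (‖s‖ * x ^ (-(s.re + 1)))
        ≤ Real.log x * (R * x ^ (-(1 + ε))) := by
          apply mul_le_mul_of_nonneg_left _ hlog
          exact mul_le_mul hsR hle (Real.rpow_nonneg hx0.le _) hR
      _ = R * Real.log x * x ^ (-(1 + ε)) := by ring
  calc ‖lf' s x‖ ≤ ‖((x⁻¹ : ℝ) : ℂ) * (x : ℂ) ^ (-s)‖ +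
        ‖(Real.log x : ℂ) * (-s * (x : ℂ) ^ (-s - 1))‖ := norm_add_le _ _
    _ ≤ x ^ (-(1 + ε)) + R * Real.log x * x ^ (-(1 + ε)) := add_le_add h1 h2
    _ = (1 + R * Real.log x) * x ^ (-(1 + ε)) := by ring


/-- Paired terms of the differentiated eta series. -/
noncomputable def etaP (k : ℕ) (s : ℂ) : ℂ := etaT s (2 * k) + etaT s (2 * k + 1)

lemma etaT_eq (s : ℂ) (n : ℕ) : etaT s n = (-1) ^ (n + 1) * lf s ((n : ℝ) + 1) := by
  unfold etaT lf
  have h1 : ((n : ℂ) + 1) = (((n : ℝ) + 1 : ℝ) : ℂ) := by push_cast; ring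
  rw [h1, ← Complex.ofReal_log (by positivity), Complex.cpow_neg, div_eq_mul_inv]
  ring

lemma etaP_eq (k : ℕ) (s : ℂ) :
    etaP k s = lf s (2 * (k : ℝ) + 2) - lf s (2 * (k : ℝ) + 1) := by
  have h1 : (-1 : ℂ) ^ (2 * k + 1) = -1 := Odd.neg_one_pow ⟨k, by ring⟩
  have h2 : (-1 : ℂ) ^ (2 * k + 1 + 1) = 1 := Even.neg_one_pow ⟨k + 1, by ring⟩
  rw [etaP, etaT_eq, etaT_eq, h1, h2]
  push_cast
  ring_nf

lemma rpow_anti {x y c : ℝ} (hx : 0 < x) (hxy : x ≤ y) (hc : 0 ≤ c) :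
    y ^ (-c) ≤ x ^ (-c) := by
  rw [Real.rpow_neg hx.le, Real.rpow_neg (hx.trans_le hxy).le]
  exact inv_anti₀ (Real.rpow_pos_of_pos hx _) (Real.rpow_le_rpow hx.le hxy hc)

lemma etaP_bound {ε R : ℝ} (hε : 0 < ε) {s : ℂ} (hsε : ε ≤ s.re) (hsR : ‖s‖ ≤ R)
    (k : ℕ) :
    ‖etaP k s‖ ≤ (1 + R * Real.log (2 * (k : ℝ) + 2)) * (2 * (k : ℝ) + 1) ^ (-(1 + ε)) := by
  have hR : 0 ≤ R := le_trans (norm_nonneg s) hsR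
  set a : ℝ := 2 * (k : ℝ) + 1 with ha
  have ha1 : (1 : ℝ) ≤ a := by
    have : (0:ℝ) ≤ (k:ℝ) := k.cast_nonneg
    rw [ha]; linarith
  have ha0 : (0 : ℝ) < a := lt_of_lt_of_le one_pos ha1
  set C : ℝ := (1 + R * Real.log (2 * (k : ℝ) + 2)) * a ^ (-(1 + ε)) with hC
  have hIcc : Convex ℝ (Set.Icc a (a + 1)) := convex_Icc _ _
  have hder : ∀ x ∈ Set.Icc a (a + 1), HasDerivWithinAt (lf s) (lf' s x) (Set.Icc a (a + 1)) x :=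
    fun x hx => (lf_hasDerivAt s (lt_of_lt_of_le ha0 hx.1)).hasDerivWithinAt
  have hbd : ∀ x ∈ Set.Icc a (a + 1), ‖lf' s x‖ ≤ C := by
    intro x hx
    have hx1 : (1 : ℝ) ≤ x := le_trans ha1 hx.1
    have hx0 : (0 : ℝ) < x := lt_of_lt_of_le one_pos hx1
    refine le_trans (lf'_norm_le hsε hsR hx1) ?_
    have hlog : Real.log x ≤ Real.log (2 * (k : ℝ) + 2) := by
      apply Real.log_le_log hx0
      have : a + 1 = 2 * (k : ℝ) + 2 := by ring
      linarith [hx.2]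
    have hrp : x ^ (-(1 + ε)) ≤ a ^ (-(1 + ε)) := rpow_anti ha0 hx.1 (by linarith)
    have hln : (0:ℝ) ≤ Real.log (2 * (k:ℝ) + 2) :=
      Real.log_nonneg (by linarith)
    apply mul_le_mul _ hrp (Real.rpow_nonneg hx0.le _) (by positivity)
    nlinarith [mul_le_mul_of_nonneg_left hlog hR]
  have key := hIcc.norm_image_sub_le_of_norm_hasDerivWithin_le hder hbd
    (Set.left_mem_Icc.mpr (by linarith)) (Set.right_mem_Icc.mpr (by linarith))
  rw [etaP_eq]
  have : lf s (2 * (k : ℝ) + 2) = lf s (a + 1) := by norm_num [ha]; ring_nf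
  rw [this]
  simpa using key

lemma summable_aux {c : ℝ} (hc : c < -1) : Summable (fun k : ℕ => ((k : ℝ) + 1) ^ c) := by
  have h := (summable_nat_add_iff (f := fun n : ℕ => (n : ℝ) ^ c) 1).mpr
    (Real.summable_nat_rpow.mpr hc)
  refine h.congr fun k => ?_
  push_cast
  ring_nf

lemma summable_bound {ε R : ℝ} (hε : 0 < ε) (hR : 0 ≤ R) :
    Summable (fun k : ℕ =>
      (1 + R * Real.log (2 * (k : ℝ) + 2)) * (2 * (k : ℝ) + 1) ^ (-(1 + ε))) := by
  set C : ℝ := R * (2 : ℝ) ^ (ε / 2) / (ε / 2) with hCdef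
  have hC : 0 ≤ C := by positivity
  have hsum : Summable (fun k : ℕ =>
      ((k : ℝ) + 1) ^ (-(1 + ε)) + C * ((k : ℝ) + 1) ^ (-(1 + ε / 2))) :=
    (summable_aux (by linarith)).add ((summable_aux (by linarith)).mul_left C)
  refine Summable.of_nonneg_of_le (fun k => ?_) (fun k => ?_) hsum
  · have h1 : (0:ℝ) ≤ Real.log (2 * (k : ℝ) + 2) :=
      Real.log_nonneg (by push_cast; linarith)
    positivity
  · have hk1 : (0:ℝ) < (k : ℝ) + 1 := by positivity
    have hk2 : (0:ℝ) < 2 * (k : ℝ) + 1 := by positivity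
    have hanti : (2 * (k : ℝ) + 1) ^ (-(1 + ε)) ≤ ((k : ℝ) + 1) ^ (-(1 + ε)) :=
      rpow_anti hk1 (by linarith) (by linarith)
    have hrp_nonneg : (0:ℝ) ≤ (2 * (k : ℝ) + 1) ^ (-(1 + ε)) := Real.rpow_nonneg hk2.le _
    have hlog : Real.log (2 * (k : ℝ) + 2) ≤ (2 * (k:ℝ) + 2) ^ (ε / 2) / (ε / 2) :=
      Real.log_le_rpow_div (by positivity) (by linarith)
    have hsplit : (2 * (k:ℝ) + 2) ^ (ε / 2) = (2:ℝ) ^ (ε/2) * ((k:ℝ) + 1) ^ (ε/2) := by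
      rw [← Real.mul_rpow (by norm_num) hk1.le]; ring_nf
    have h2 : R * Real.log (2 * (k : ℝ) + 2) * (2 * (k : ℝ) + 1) ^ (-(1 + ε)) ≤
        C * ((k : ℝ) + 1) ^ (-(1 + ε / 2)) := by
      have hstep : R * Real.log (2 * (k : ℝ) + 2) ≤ C * ((k:ℝ) + 1) ^ (ε/2) := by
        calc R * Real.log (2 * (k : ℝ) + 2)
            ≤ R * ((2 * (k:ℝ) + 2) ^ (ε / 2) / (ε / 2)) :=
              mul_le_mul_of_nonneg_left hlog hR
          _ = C * ((k:ℝ) + 1) ^ (ε/2) := by rw [hsplit, hCdef]; field_simp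
      calc R * Real.log (2 * (k : ℝ) + 2) * (2 * (k : ℝ) + 1) ^ (-(1 + ε))
          ≤ (C * ((k:ℝ) + 1) ^ (ε/2)) * ((k : ℝ) + 1) ^ (-(1 + ε)) := by
            apply mul_le_mul hstep (rpow_anti hk1 (by linarith) (by linarith)) hrp_nonneg
            positivity
        _ = C * ((k : ℝ) + 1) ^ (-(1 + ε / 2)) := by
            rw [mul_assoc, ← Real.rpow_add hk1]; ring_nf
    calc (1 + R * Real.log (2 * (k : ℝ) + 2)) * (2 * (k : ℝ) + 1) ^ (-(1 + ε))
        = (2 * (k : ℝ) + 1) ^ (-(1 + ε)) +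
          R * Real.log (2 * (k : ℝ) + 2) * (2 * (k : ℝ) + 1) ^ (-(1 + ε)) := by ring
      _ ≤ ((k : ℝ) + 1) ^ (-(1 + ε)) + C * ((k : ℝ) + 1) ^ (-(1 + ε / 2)) :=
          add_le_add hanti h2


/-- The limit function: sum of the paired series. -/
noncomputable def etaG (s : ℂ) : ℂ := ∑' k, etaP k s

lemma isOpen_halfplane : IsOpen {s : ℂ | 0 < s.re} :=
  isOpen_lt continuous_const Complex.continuous_re

lemma etaP_differentiable (k : ℕ) : Differentiable ℂ (etaP k) := by
  have hd : ∀ c : ℝ, 0 < c → Differentiable ℂ (fun s : ℂ => lf s c) := by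
    intro c hc
    apply Differentiable.const_mul
    exact (differentiable_id.neg).const_cpow (Or.inl (by exact_mod_cast hc.ne'))
  have h1 := hd (2 * (k : ℝ) + 2) (by positivity)
  have h2 := hd (2 * (k : ℝ) + 1) (by positivity)
  intro z
  apply DifferentiableAt.congr_of_eventuallyEq ((h1.sub h2) z)
  filter_upwards with w using (etaP_eq k w)

lemma summable_etaP {s : ℂ} (hs : 0 < s.re) : Summable (fun k => etaP k s) := by
  apply Summable.of_norm_bounded (summable_bound hs (norm_nonneg s))
  exact fun k => etaP_bound hs (le_refl s.re) (le_refl ‖s‖) k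

lemma etaG_tlu : TendstoLocallyUniformlyOn (fun K s => ∑ k ∈ Finset.range K, etaP k s)
    etaG atTop {s : ℂ | 0 < s.re} := by
  rw [tendstoLocallyUniformlyOn_iff_forall_isCompact isOpen_halfplane]
  intro K hK hKc
  rcases K.eq_empty_or_nonempty with rfl | hne
  · simp [TendstoUniformlyOn]
  obtain ⟨z₀, hz₀K, hz₀min'⟩ := hKc.exists_isMinOn hne Complex.continuous_re.continuousOn
  obtain ⟨z₁, _, hz₁max'⟩ := hKc.exists_isMaxOn hne continuous_norm.continuousOn
  have hz₀min : ∀ z ∈ K, z₀.re ≤ z.re := fun z hz => hz₀min' hz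
  have hz₁max : ∀ z ∈ K, ‖z‖ ≤ ‖z₁‖ := fun z hz => hz₁max' hz
  have hε : 0 < z₀.re := hK hz₀K
  exact tendstoUniformlyOn_tsum_nat (summable_bound hε (norm_nonneg z₁))
    fun k z hz => etaP_bound hε (hz₀min z hz) (hz₁max z hz) k

lemma etaG_differentiableOn : DifferentiableOn ℂ etaG {s : ℂ | 0 < s.re} := by
  apply etaG_tlu.differentiableOn _ isOpen_halfplane
  filter_upwards with K
  apply DifferentiableOn.fun_sum
  exact fun k _ => (etaP_differentiable k).differentiableOn

lemma norm_etaT_le {s : ℂ} (hs : 0 < s.re) (n : ℕ) :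
    ‖etaT s n‖ ≤ (2 / s.re) * ((n : ℝ) + 1) ^ (-(s.re / 2)) := by
  have hn1 : (0:ℝ) < (n : ℝ) + 1 := by positivity
  rw [etaT_eq, lf]
  have hlog : (0:ℝ) ≤ Real.log ((n:ℝ) + 1) := Real.log_nonneg (by linarith)
  rw [norm_mul, norm_mul]
  have e1 : ‖(-1 : ℂ) ^ (n + 1)‖ = 1 := by
    rw [norm_pow, norm_neg, norm_one, one_pow]
  have e2 : ‖((Real.log ((n:ℝ) + 1) : ℝ) : ℂ)‖ = Real.log ((n:ℝ) + 1) := by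
    rw [Complex.norm_real, Real.norm_eq_abs, abs_of_nonneg hlog]
  rw [e1, e2, one_mul, norm_cpow_real hn1]
  have h1 : Real.log ((n:ℝ) + 1) ≤ ((n:ℝ) + 1) ^ (s.re / 2) / (s.re / 2) :=
    Real.log_le_rpow_div hn1.le (by linarith)
  calc Real.log ((n:ℝ) + 1) * ((n:ℝ)+1) ^ (-s).re
      ≤ (((n:ℝ) + 1) ^ (s.re / 2) / (s.re / 2)) * ((n:ℝ)+1) ^ (-s.re) := by
        apply mul_le_mul h1 (le_of_eq (by simp)) (Real.rpow_nonneg hn1.le _) (by positivity)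
    _ = (2 / s.re) * ((n : ℝ) + 1) ^ (-(s.re / 2)) := by
        rw [div_mul_eq_mul_div, ← Real.rpow_add hn1]
        rw [show s.re / 2 + -s.re = -(s.re/2) by ring]
        field_simp

lemma tendsto_etaT_zero {s : ℂ} (hs : 0 < s.re) :
    Tendsto (fun n : ℕ => etaT s n) atTop (nhds 0) := by
  apply squeeze_zero_norm (norm_etaT_le hs)
  have h0 : Tendsto (fun x : ℝ => x ^ (-(s.re / 2))) atTop (nhds 0) :=
    tendsto_rpow_neg_atTop (by linarith)
  have h1 : Tendsto (fun n : ℕ => ((n : ℝ) + 1)) atTop atTop :=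
    tendsto_atTop_add_const_right _ _ tendsto_natCast_atTop_atTop
  have := (h0.comp h1).const_mul (2 / s.re)
  simpa using this

lemma sum_pair (s : ℂ) (K : ℕ) :
    ∑ n ∈ Finset.range (2 * K), etaT s n = ∑ k ∈ Finset.range K, etaP k s := by
  induction K with
  | zero => simp
  | succ K ih =>
      rw [Finset.sum_range_succ, ← ih, show 2 * (K + 1) = 2 * K + 1 + 1 by ring,
        Finset.sum_range_succ, Finset.sum_range_succ, etaP]
      ring

lemma tendsto_partial_sums {s : ℂ} (hs : 0 < s.re) :
    Tendsto (fun N : ℕ => ∑ n ∈ Finset.range N, etaT s n) atTop (nhds (etaG s)) := by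
  have hdiv : Tendsto (fun N : ℕ => N / 2) atTop atTop :=
    Filter.tendsto_atTop_atTop.mpr fun b =>
      ⟨2 * b, fun a ha => (Nat.le_div_iff_mul_le two_pos).mpr (by omega)⟩
  have hsub : Tendsto (fun N : ℕ => N - 1) atTop atTop :=
    Filter.tendsto_atTop_atTop.mpr fun b => ⟨b + 1, fun a ha => by omega⟩
  have h1 : Tendsto (fun N : ℕ => ∑ k ∈ Finset.range (N / 2), etaP k s) atTop
      (nhds (etaG s)) :=
    ((summable_etaP hs).hasSum.tendsto_sum_nat).comp hdiv
  have h2 : Tendsto (fun N : ℕ => (if N % 2 = 1 then etaT s (N - 1) else 0 : ℂ)) atTop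
      (nhds 0) := by
    have hb : ∀ N : ℕ, ‖(if N % 2 = 1 then etaT s (N - 1) else 0 : ℂ)‖ ≤
        ‖etaT s (N - 1)‖ := by
      intro N
      split
      · exact le_refl _
      · simp
    apply squeeze_zero_norm hb
    have := (tendsto_etaT_zero hs).comp hsub
    exact (tendsto_zero_iff_norm_tendsto_zero.mp this)
  have key : ∀ N : ℕ, ∑ n ∈ Finset.range N, etaT s n =
      ∑ k ∈ Finset.range (N / 2), etaP k s + (if N % 2 = 1 then etaT s (N - 1) else 0) := by
    intro N
    rcases Nat.even_or_odd N with ⟨m, hm⟩ | ⟨m, hm⟩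
    · have hN : N = 2 * m := by omega
      subst hN
      rw [sum_pair]
      have : 2 * m / 2 = m := by omega
      rw [this]
      simp only [Nat.mul_mod_right]
      norm_num
    · have hN : N = 2 * m + 1 := by omega
      subst hN
      have hd : (2 * m + 1) / 2 = m := by omega
      have hm2 : (2 * m + 1) % 2 = 1 := by omega
      rw [Finset.sum_range_succ, sum_pair, hd, hm2]
      simp
  simp only [key]
  simpa using h1.add h2


noncomputable def ell (s : ℂ) (n : ℕ) : ℂ := Complex.log n / (n : ℂ) ^ s

noncomputable def bb (s : ℂ) (m : ℕ) : ℂ := (-1) ^ m * ell s m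

noncomputable def aa (s : ℂ) (n : ℕ) : ℂ := bb s (n + 1)

lemma term_logMul_eq (s : ℂ) (n : ℕ) :
    LSeries.term (LSeries.logMul 1) s n = ell s n := by
  rcases eq_or_ne n 0 with rfl | hn
  · simp [LSeries.term, ell]
  · simp [LSeries.term_of_ne_zero hn, LSeries.logMul, ell]

lemma habs {s : ℂ} (hs : 1 < s.re) : LSeries.abscissaOfAbsConv 1 < s.re := by
  rw [LSeries.abscissaOfAbsConv_one]; exact_mod_cast hs

lemma summable_ell {s : ℂ} (hs : 1 < s.re) : Summable (ell s) :=
  (LSeriesSummable_logMul_of_lt_re (habs hs)).congr (term_logMul_eq s)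

lemma deriv_zeta_eq {s : ℂ} (hs : 1 < s.re) :
    deriv riemannZeta s = -∑' n, ell s n := by
  have hopen : {z : ℂ | 1 < z.re} ∈ nhds s :=
    (isOpen_lt continuous_const Complex.continuous_re).mem_nhds hs
  have h1 : deriv riemannZeta s = deriv (LSeries 1) s := by
    apply Filter.EventuallyEq.deriv_eq
    filter_upwards [hopen] with z hz using (LSeries_one_eq_riemannZeta hz).symm
  rw [h1, LSeries_deriv (habs hs)]
  congr 1
  exact tsum_congr (term_logMul_eq s)

lemma summable_bb {s : ℂ} (hs : 1 < s.re) : Summable (bb s) := by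
  apply Summable.of_norm_bounded (summable_ell hs).norm
  intro m
  simp [bb, norm_mul]

lemma hinj2 : Function.Injective (fun k : ℕ => 2 * k) := by
  intro a b h
  simp only at h
  omega

lemma hinj21 : Function.Injective (fun k : ℕ => 2 * k + 1) := by
  intro a b h
  simp only at h
  omega

lemma ell_even (s : ℂ) (k : ℕ) :
    ell s (2 * k) = 2 ^ (-s) * ((Real.log 2 : ℂ) * LSeries.term 1 s k + ell s k) := by
  rcases eq_or_ne k 0 with rfl | hk
  · simp [ell, LSeries.term]
  · have h2s : (2 : ℂ) ^ s ≠ 0 := by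
      rw [Ne, Complex.cpow_eq_zero_iff]; norm_num
    have hks : ((k : ℂ)) ^ s ≠ 0 := by
      rw [Ne, Complex.cpow_eq_zero_iff]
      exact fun h => hk (by exact_mod_cast h.1)
    have hcast : ((2 * k : ℕ) : ℂ) = (((2 : ℝ) : ℂ)) * (((k : ℝ) : ℂ)) := by push_cast; ring
    have hpow : ((2 * k : ℕ) : ℂ) ^ s = 2 ^ s * (k : ℂ) ^ s := by
      rw [hcast, Complex.mul_cpow_ofReal_nonneg (by norm_num) (k.cast_nonneg)]
      norm_num
    have hlog2k : Complex.log ((2 * k : ℕ) : ℂ) = (Real.log 2 : ℂ) + Complex.log k := by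
      rw [← Complex.natCast_log, ← Complex.natCast_log,
        show ((2 * k : ℕ) : ℝ) = 2 * (k : ℝ) by push_cast; ring,
        Real.log_mul (by norm_num) (Nat.cast_ne_zero.mpr hk)]
      push_cast
      ring
    have hzk : LSeries.term 1 s k = 1 / (k : ℂ) ^ s := by
      simp [LSeries.term_of_ne_zero hk]
    rw [ell, hpow, hlog2k, hzk, Complex.cpow_neg, ell]
    field_simp
    try ring

lemma etaT_eq_bb (s : ℂ) (n : ℕ) : etaT s n = aa s n := by
  rw [aa, bb, ell]
  simp only [etaT]
  have : ((n + 1 : ℕ) : ℂ) = (n : ℂ) + 1 := by push_cast; ring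
  rw [this]
  ring

lemma etaG_eq_tsum_bb {s : ℂ} (hs : 1 < s.re) : etaG s = ∑' m, bb s m := by
  have hsa : Summable (aa s) := by
    have := (summable_nat_add_iff (f := bb s) 1).mpr (summable_bb hs)
    exact this.congr fun n => by rw [aa]
  have hae : Summable (fun k => aa s (2 * k)) := hsa.comp_injective hinj2
  have hao : Summable (fun k => aa s (2 * k + 1)) := hsa.comp_injective hinj21
  have hpair : ∀ k, etaP k s = aa s (2 * k) + aa s (2 * k + 1) := by
    intro k
    rw [etaP, etaT_eq_bb, etaT_eq_bb]
  have hb0 : bb s 0 = 0 := by simp [bb, ell]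
  calc etaG s = ∑' k, (aa s (2 * k) + aa s (2 * k + 1)) := tsum_congr hpair
    _ = (∑' k, aa s (2 * k)) + ∑' k, aa s (2 * k + 1) := Summable.tsum_add hae hao
    _ = ∑' n, aa s n := tsum_even_add_odd hae hao
    _ = ∑' m, bb s m := by
        rw [tsum_eq_zero_add' (f := bb s) (hsa.congr fun n => by rw [aa]), hb0, zero_add]
        exact tsum_congr fun n => by rw [aa]

lemma etaG_eq_deriv {s : ℂ} (hs : 1 < s.re) :
    etaG s = (1 - 2 ^ (1 - s)) * deriv riemannZeta s +
      (Real.log 2 : ℂ) * 2 ^ (1 - s) * riemannZeta s := by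
  have hzsum : Summable (fun n => LSeries.term 1 s n) := LSeriesSummable_one_iff.mpr hs
  have hzeta : riemannZeta s = ∑' n, LSeries.term 1 s n := (LSeries_one_eq_riemannZeta hs).symm
  have hsumℓ := summable_ell hs
  have hsumb := summable_bb hs
  have hbe : Summable (fun k => bb s (2 * k)) := hsumb.comp_injective hinj2
  have hbo : Summable (fun k => bb s (2 * k + 1)) := hsumb.comp_injective hinj21
  have hle : Summable (fun k => ell s (2 * k)) := hsumℓ.comp_injective hinj2
  have hlo : Summable (fun k => ell s (2 * k + 1)) := hsumℓ.comp_injective hinj21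
  have hB : (∑' k, bb s (2 * k)) + ∑' k, bb s (2 * k + 1) = ∑' m, bb s m :=
    tsum_even_add_odd hbe hbo
  have hL : (∑' k, ell s (2 * k)) + ∑' k, ell s (2 * k + 1) = ∑' m, ell s m :=
    tsum_even_add_odd hle hlo
  have hbe_eq : ∀ k, bb s (2 * k) = ell s (2 * k) := by
    intro k; rw [bb, pow_mul]; norm_num
  have hbo_eq : ∀ k, bb s (2 * k + 1) = -ell s (2 * k + 1) := by
    intro k; rw [bb, pow_succ, pow_mul]; norm_num
  have hBeven : ∑' k, ell s (2 * k) =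
      2 ^ (-s) * ((Real.log 2 : ℂ) * riemannZeta s + ∑' n, ell s n) := by
    calc ∑' k, ell s (2 * k)
        = ∑' k, 2 ^ (-s) * ((Real.log 2 : ℂ) * LSeries.term 1 s k + ell s k) :=
          tsum_congr (ell_even s)
      _ = 2 ^ (-s) * ∑' k, ((Real.log 2 : ℂ) * LSeries.term 1 s k + ell s k) := tsum_mul_left
      _ = 2 ^ (-s) * ((Real.log 2 : ℂ) * riemannZeta s + ∑' n, ell s n) := by
          rw [Summable.tsum_add (hzsum.mul_left _) hsumℓ, tsum_mul_left, hzeta]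
  have hBval : ∑' m, bb s m = 2 * (∑' k, ell s (2 * k)) - ∑' m, ell s m := by
    rw [← hB, tsum_congr hbe_eq, tsum_congr hbo_eq, tsum_neg, ← hL]
    ring
  have h2pow : (2 : ℂ) ^ (1 - s) = 2 * 2 ^ (-s) := by
    rw [show (1 : ℂ) - s = 1 + -s by ring, Complex.cpow_add _ _ (by norm_num : (2:ℂ) ≠ 0),
      Complex.cpow_one]
  rw [etaG_eq_tsum_bb hs, hBval, hBeven, deriv_zeta_eq hs, h2pow]
  ring


lemma setcalc : {z : ℂ | 0 < z.re} \ {1} =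
    {z : ℂ | 1 < z.re} ∪ {z : ℂ | 0 < z.re ∧ ¬(z.im = 0 ∧ 1 ≤ z.re)} := by
  ext z
  simp only [Set.mem_diff, Set.mem_setOf_eq, Set.mem_singleton_iff, Set.mem_union]
  constructor
  · rintro ⟨h0, h1⟩
    by_cases him : z.im = 0
    · rcases lt_or_ge z.re 1 with h | h
      · exact Or.inr ⟨h0, fun hc => absurd hc.2 (not_le.mpr h)⟩
      · rcases eq_or_lt_of_le h with he | hlt
        · exact absurd (Complex.ext he.symm (by simpa using him)) h1
        · exact Or.inl hlt
    · exact Or.inr ⟨h0, fun hc => him hc.1⟩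
  · rintro (h | ⟨h0, hn⟩)
    · refine ⟨by linarith, fun hc => ?_⟩
      rw [hc] at h
      simp at h
    · refine ⟨h0, fun hc => hn ?_⟩
      rw [hc]
      norm_num

lemma isPreconnected_slit : IsPreconnected {z : ℂ | 0 < z.re ∧ ¬(z.im = 0 ∧ 1 ≤ z.re)} := by
  have : IsPathConnected {z : ℂ | 0 < z.re ∧ ¬(z.im = 0 ∧ 1 ≤ z.re)} := by
    refine ⟨(1/2 : ℂ), ⟨by norm_num, by norm_num⟩, ?_⟩
    intro z hz
    apply JoinedIn.of_segment_subset
    intro w hw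
    rw [segment_eq_image] at hw
    obtain ⟨t, ht, rfl⟩ := hw
    obtain ⟨ht0, ht1⟩ := ht
    have hre : ((1 - t) • (1/2 : ℂ) + t • z).re = (1 - t) / 2 + t * z.re := by
      simp [Complex.real_smul, Complex.add_re, Complex.mul_re]
      ring
    have him : ((1 - t) • (1/2 : ℂ) + t • z).im = t * z.im := by
      simp [Complex.real_smul, Complex.add_im, Complex.mul_im]
    constructor
    · rw [hre]
      rcases eq_or_lt_of_le ht1 with rfl | hlt
      · have := hz.1
        norm_num
        linarith
      · have := mul_nonneg ht0 hz.1.le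
        linarith
    · rw [him, hre]
      rintro ⟨hi, hr⟩
      rcases mul_eq_zero.mp hi with rfl | hzim
      · norm_num at hr
      · have hzre : z.re < 1 := by
          by_contra hcon
          exact hz.2 ⟨hzim, le_of_not_gt hcon⟩
        nlinarith [hz.1, mul_nonneg (by linarith : (0:ℝ) ≤ 1 - t) hz.1.le,
          mul_nonneg ht0 (by linarith : (0:ℝ) ≤ 1 - z.re)]
  exact this.isConnected.isPreconnected

lemma isPreconnected_U : IsPreconnected ({z : ℂ | 0 < z.re} \ {1}) := by
  rw [setcalc]
  apply IsPreconnected.union (2 + Complex.I)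
  · simp
  · constructor
    · simp
    · simp
  · exact (convex_halfSpace_re_gt 1).isPreconnected
  · exact isPreconnected_slit

noncomputable def TT (z : ℂ) : ℂ :=
  (1 - 2 ^ (1 - z)) * deriv riemannZeta z +
    (Real.log 2 : ℂ) * 2 ^ (1 - z) * riemannZeta z

lemma etaG_eq_TT {s : ℂ} (hs : 0 < s.re) (hs1 : s ≠ 1) : etaG s = TT s := by
  have hUopen : IsOpen ({z : ℂ | 0 < z.re} \ {1}) :=
    isOpen_halfplane.sdiff isClosed_singleton
  have hGa : AnalyticOnNhd ℂ etaG ({z : ℂ | 0 < z.re} \ {1}) := fun z hz =>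
    (etaG_differentiableOn.analyticOnNhd isOpen_halfplane) z hz.1
  have hζdo : DifferentiableOn ℂ riemannZeta {(1 : ℂ)}ᶜ := fun z hz =>
    (differentiableAt_riemannZeta hz).differentiableWithinAt
  have hζa : AnalyticOnNhd ℂ riemannZeta {(1 : ℂ)}ᶜ :=
    hζdo.analyticOnNhd isOpen_compl_singleton
  have hζ'a : AnalyticOnNhd ℂ (deriv riemannZeta) {(1 : ℂ)}ᶜ := hζa.deriv
  have hcp : Differentiable ℂ (fun w : ℂ => (2 : ℂ) ^ (1 - w)) :=
    ((differentiable_const _).sub differentiable_id).const_cpow (Or.inl two_ne_zero)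
  have hcpa : AnalyticOnNhd ℂ (fun w : ℂ => (2 : ℂ) ^ (1 - w)) Set.univ :=
    hcp.differentiableOn.analyticOnNhd isOpen_univ
  have hTa : AnalyticOnNhd ℂ TT ({z : ℂ | 0 < z.re} \ {1}) := by
    intro z hz
    have hz1 : z ∈ ({(1 : ℂ)}ᶜ : Set ℂ) := hz.2
    exact ((analyticAt_const.sub (hcpa z (Set.mem_univ z))).mul (hζ'a z hz1)).add
      (((analyticAt_const.mul (hcpa z (Set.mem_univ z))).mul (hζa z hz1)))
  have h2U : (2 : ℂ) ∈ ({z : ℂ | 0 < z.re} \ {1}) := by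
    constructor
    · simp
    · simp
  have heq2 : etaG =ᶠ[nhds 2] TT := by
    have hmem : {z : ℂ | 1 < z.re} ∈ nhds (2 : ℂ) :=
      (isOpen_lt continuous_const Complex.continuous_re).mem_nhds (by simp)
    filter_upwards [hmem] with z hz
    exact etaG_eq_deriv hz
  exact hGa.eqOn_of_preconnected_of_eventuallyEq hTa isPreconnected_U h2U heq2 ⟨hs, hs1⟩

end EtaDeriv

open EtaDeriv in
/-- For `Re(s) > 0` with `2^(1-s) ≠ 1`, termwise differentiation of the eta series:
`∑_{n=1}^{∞} (-1)^n (log n)/n^s = (1 - 2^(1-s)) ζ'(s) + (log 2) 2^(1-s) ζ(s)`. -/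
theorem eta_series_deriv_zeta (s : ℂ) (hs : 0 < s.re) (h2 : (2 : ℂ) ^ (1 - s) ≠ 1) :
    Tendsto (fun N : ℕ => ∑ n ∈ Finset.range N,
        (-1) ^ (n + 1) * Complex.log ((n : ℂ) + 1) / ((n : ℂ) + 1) ^ s)
      atTop
      (nhds ((1 - 2 ^ (1 - s)) * deriv riemannZeta s +
        (Real.log 2 : ℂ) * 2 ^ (1 - s) * riemannZeta s)) := by
  have hs1 : s ≠ 1 := by
    rintro rfl
    apply h2
    rw [sub_self, Complex.cpow_zero]
  have h := tendsto_partial_sums hs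
  rw [etaG_eq_TT hs hs1] at h
  exact h
end
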